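/- Let f(x_i, x_j) = −∫_{x*_i}^{x_i} w_i^{-1} ln( t^a / (c Σ_{l∈R} k_l t^{v_{il}}) ) dt + ∫_{x*_j}^{x_j} w_j^{-1} ln( t^b / (c Σ_{l∈L} k_l t^{v_{jl}}) ) dt, where c = (x*_i)^a / Σ_{l∈R} k_l (x*_i)^{v_{il}} = (x*_j)^b / Σ_{l∈L} k_l (x*_j)^{v_{jl}}. Then ∇f(x*) = 0, and the Hessian of f is the diagonal matrix with entries −w_i^{-1} Σ_{l∈R} k_l (a − v_{il}) x_i^{v_{il}−1} / Σ_{l∈R} k_l x_i^{v_{il}} and w_j^{-1} Σ_{l∈L} k_l (b − v_{jl}) x_j^{v_{jl}−1} / Σ_{l∈L} k_l x_j^{v_{jl}}. Hence if w_i^{-1} Σ_{l∈R} k_l (a − v_{il}) (x*_i)^{v_{il}−1} < 0 and w_j^{-1} Σ_{l∈L} k_l (b − v_{jl}) (x*_j)^{v_{jl}−1} > 0, then f is strictly convex in a neighborhood of x* and f(x) > 0 = f(x*) there for x ≠ x*. -/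

import Mathlib

open Real MeasureTheory Set Filter Topology

section Aux
variable {ι : Type} [Fintype ι] [Nonempty ι]

private lemma sum_pos' (k : ι → ℝ) (hk : ∀ l, 0 < k l) (v : ι → ℕ) {t : ℝ} (ht : 0 < t) :
    0 < ∑ l, k l * t ^ v l :=
  Finset.sum_pos (fun l _ => mul_pos (hk l) (pow_pos ht _)) Finset.univ_nonempty

private lemma arg_pos (k : ι → ℝ) (hk : ∀ l, 0 < k l) (v : ι → ℕ) (a : ℕ) {c : ℝ} (hc : 0 < c)
    {t : ℝ} (ht : 0 < t) : 0 < t ^ a / (c * ∑ l, k l * t ^ v l) :=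
  div_pos (pow_pos ht _) (mul_pos hc (sum_pos' k hk v ht))

private lemma phi_contOn (k : ι → ℝ) (hk : ∀ l, 0 < k l) (v : ι → ℕ) (a : ℕ) (c w : ℝ)
    (hc : 0 < c) :
    ContinuousOn (fun t => w * Real.log (t ^ a / (c * ∑ l, k l * t ^ v l))) (Set.Ioi 0) := by
  refine continuousOn_const.mul (ContinuousOn.log ?_ ?_)
  · exact ContinuousOn.div (continuousOn_pow a)
      (continuousOn_const.mul (continuousOn_finset_sum _ fun l _ =>
        continuousOn_const.mul (continuousOn_pow _)))
      (fun t ht => (mul_pos hc (sum_pos' k hk v ht)).ne')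
  · exact fun t ht => (arg_pos k hk v a hc ht).ne'

private lemma uIcc_sub {x0 t : ℝ} (hx0 : 0 < x0) (ht : 0 < t) : Set.uIcc x0 t ⊆ Set.Ioi 0 :=
  fun u hu => lt_of_lt_of_le (lt_min hx0 ht) hu.1

private lemma F_hasDeriv {φ : ℝ → ℝ} (hφ : ContinuousOn φ (Set.Ioi 0)) {x0 : ℝ} (hx0 : 0 < x0)
    {t : ℝ} (ht : 0 < t) :
    HasDerivAt (fun s => ∫ u in x0..s, φ u) (φ t) t := by
  have hct : ContinuousAt φ t := hφ.continuousAt (Ioi_mem_nhds ht)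
  refine intervalIntegral.integral_hasDerivAt_right
    ((hφ.mono (uIcc_sub hx0 ht)).intervalIntegrable) ?_ hct
  exact ⟨Set.Ioi 0, Ioi_mem_nhds ht, hφ.aestronglyMeasurable measurableSet_Ioi⟩

private lemma phi_hasDeriv (k : ι → ℝ) (hk : ∀ l, 0 < k l) (v : ι → ℕ) (a : ℕ) (c w : ℝ)
    (hc : 0 < c) {t : ℝ} (ht : 0 < t) :
    HasDerivAt (fun u => w * Real.log (u ^ a / (c * ∑ l, k l * u ^ v l)))
      (w * (∑ l, k l * ((a : ℝ) - (v l : ℝ)) * t ^ ((v l : ℝ) - 1)) / (∑ l, k l * t ^ v l)) t := by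
  have hS : ∀ u : ℝ, 0 < u → (0:ℝ) < ∑ l, k l * u ^ v l := fun u hu => sum_pos' k hk v hu
  -- rewrite φ on a neighborhood
  have heq : (fun u : ℝ => w * ((a : ℝ) * Real.log u - Real.log c - Real.log (∑ l, k l * u ^ v l)))
      =ᶠ[𝓝 t] (fun u => w * Real.log (u ^ a / (c * ∑ l, k l * u ^ v l))) := by
    filter_upwards [Ioi_mem_nhds ht] with u hu
    rw [Real.log_div (pow_pos hu a).ne' (mul_pos hc (hS u hu)).ne',
      Real.log_mul hc.ne' (hS u hu).ne', Real.log_pow]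
    ring
  have hSd : HasDerivAt (fun u : ℝ => ∑ l, k l * u ^ v l)
      (∑ l, k l * ((v l : ℝ) * t ^ (v l - 1))) t := by
    exact HasDerivAt.fun_sum fun l _ => (hasDerivAt_pow (v l) t).const_mul (k l)
  have h1 : HasDerivAt (fun u : ℝ => w * ((a : ℝ) * Real.log u - Real.log c
      - Real.log (∑ l, k l * u ^ v l)))
      (w * ((a : ℝ) / t - (∑ l, k l * ((v l : ℝ) * t ^ (v l - 1))) / (∑ l, k l * t ^ v l))) t := by
    have hlog : HasDerivAt Real.log t⁻¹ t := Real.hasDerivAt_log ht.ne'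
    have h2 : HasDerivAt (fun u : ℝ => Real.log (∑ l, k l * u ^ v l))
        ((∑ l, k l * ((v l : ℝ) * t ^ (v l - 1))) / (∑ l, k l * t ^ v l)) t := by
      have := (Real.hasDerivAt_log (hS t ht).ne').comp t hSd
      simpa [div_eq_inv_mul, mul_comm, Function.comp_def] using this
    have := (((hlog.const_mul (a : ℝ)).sub_const (Real.log c)).sub h2).const_mul w
    simpa [div_eq_inv_mul, mul_comm] using this
  have h3 := h1.congr_of_eventuallyEq heq.symm
  refine h3.congr_deriv ?_
  -- value equality
  have htS := (hS t ht).ne'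
  have key : ∀ l : ι, k l * ((a : ℝ) - (v l : ℝ)) * t ^ ((v l : ℝ) - 1) * t
      = k l * ((a:ℝ) * t ^ v l - (v l : ℝ) * t ^ (v l - 1) * t) := by
    intro l
    have h4 : t ^ ((v l : ℝ) - 1) * t = t ^ (v l : ℕ) := by
      rw [← Real.rpow_natCast t (v l), ← Real.rpow_add_one ht.ne']
      norm_num
    have h5 : (v l : ℝ) * t ^ (v l - 1) * t = (v l : ℝ) * t ^ (v l : ℕ) := by
      cases' Nat.eq_zero_or_pos (v l) with h h
      · simp [h]
      · rw [mul_assoc, ← pow_succ, Nat.sub_add_cancel h]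
    calc k l * ((a : ℝ) - (v l : ℝ)) * t ^ ((v l : ℝ) - 1) * t
        = k l * ((a : ℝ) - (v l : ℝ)) * (t ^ ((v l : ℝ) - 1) * t) := by ring
      _ = k l * ((a : ℝ) - (v l : ℝ)) * t ^ (v l : ℕ) := by rw [h4]
      _ = k l * ((a:ℝ) * t ^ v l - (v l : ℝ) * t ^ (v l : ℕ)) := by ring
      _ = k l * ((a:ℝ) * t ^ v l - (v l : ℝ) * t ^ (v l - 1) * t) := by rw [h5]
  have key2 : (∑ l, k l * ((a : ℝ) - (v l : ℝ)) * t ^ ((v l : ℝ) - 1)) * t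
      = (a : ℝ) * (∑ l, k l * t ^ v l) - (∑ l, k l * ((v l : ℝ) * t ^ (v l - 1))) * t := by
    rw [Finset.sum_mul, Finset.mul_sum, Finset.sum_mul, ← Finset.sum_sub_distrib]
    exact Finset.sum_congr rfl fun l _ => by rw [key l]; ring
  rw [div_sub_div _ _ ht.ne' htS, mul_div_assoc', div_eq_div_iff (mul_ne_zero ht.ne' htS) htS]
  linear_combination -(w * (∑ l, k l * t ^ v l)) * key2

private lemma psi_contOn (k : ι → ℝ) (hk : ∀ l, 0 < k l) (v : ι → ℕ) (a : ℕ) (w : ℝ) :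
    ContinuousOn (fun t => w * (∑ l, k l * ((a : ℝ) - (v l : ℝ)) * t ^ ((v l : ℝ) - 1))
      / (∑ l, k l * t ^ v l)) (Set.Ioi 0) := by
  refine ContinuousOn.div ?_ ?_ (fun t ht => (sum_pos' k hk v ht).ne')
  · refine continuousOn_const.mul (continuousOn_finset_sum _ fun l _ => ?_)
    exact continuousOn_const.mul (continuousOn_id.rpow_const fun t ht => Or.inl (ne_of_gt ht))
  · exact continuousOn_finset_sum _ fun l _ => continuousOn_const.mul (continuousOn_pow _)

private lemma F_deriv2 (k : ι → ℝ) (hk : ∀ l, 0 < k l) (v : ι → ℕ) (a : ℕ) (c w : ℝ)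
    (hc : 0 < c) {x0 : ℝ} (hx0 : 0 < x0) {t : ℝ} (ht : 0 < t) :
    deriv (deriv (fun s => ∫ u in x0..s, w * Real.log (u ^ a / (c * ∑ l, k l * u ^ v l)))) t
      = w * (∑ l, k l * ((a : ℝ) - (v l : ℝ)) * t ^ ((v l : ℝ) - 1)) / (∑ l, k l * t ^ v l) := by
  have hev : deriv (fun s => ∫ u in x0..s, w * Real.log (u ^ a / (c * ∑ l, k l * u ^ v l)))
      =ᶠ[𝓝 t] (fun u => w * Real.log (u ^ a / (c * ∑ l, k l * u ^ v l))) := by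
    filter_upwards [Ioi_mem_nhds ht] with u hu
    exact (F_hasDeriv (phi_contOn k hk v a c w hc) hx0 hu).deriv
  rw [hev.deriv_eq]
  exact (phi_hasDeriv k hk v a c w hc ht).deriv

private lemma aux_pos (k : ι → ℝ) (hk : ∀ l, 0 < k l) (v : ι → ℕ) (a : ℕ) (c w x0 : ℝ)
    (hc : 0 < c) (hx0 : 0 < x0) (hcx : c * ∑ l, k l * x0 ^ v l = x0 ^ a)
    (hsign : 0 < w * ∑ l, k l * ((a : ℝ) - (v l : ℝ)) * x0 ^ ((v l : ℝ) - 1)) :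
    ∃ δ > 0, Metric.ball x0 δ ⊆ Set.Ioi 0 ∧
      StrictConvexOn ℝ (Metric.ball x0 δ)
        (fun s => ∫ u in x0..s, w * Real.log (u ^ a / (c * ∑ l, k l * u ^ v l))) ∧
      (∀ s ∈ Metric.ball x0 δ,
        0 ≤ ∫ u in x0..s, w * Real.log (u ^ a / (c * ∑ l, k l * u ^ v l))) ∧
      (∀ s ∈ Metric.ball x0 δ, s ≠ x0 →
        0 < ∫ u in x0..s, w * Real.log (u ^ a / (c * ∑ l, k l * u ^ v l))) := by
  have hS : ∀ u : ℝ, 0 < u → (0:ℝ) < ∑ l, k l * u ^ v l := fun u hu => sum_pos' k hk v hu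
  set φ : ℝ → ℝ := fun u => w * Real.log (u ^ a / (c * ∑ l, k l * u ^ v l)) with hφdef
  set ψ : ℝ → ℝ := fun u => w * (∑ l, k l * ((a : ℝ) - (v l : ℝ)) * u ^ ((v l : ℝ) - 1))
      / (∑ l, k l * u ^ v l) with hψdef
  have hψ0 : 0 < ψ x0 := div_pos hsign (hS x0 hx0)
  have hψc : ContinuousAt ψ x0 := (psi_contOn k hk v a w).continuousAt (Ioi_mem_nhds hx0)
  have hev : ∀ᶠ u in 𝓝 x0, 0 < u ∧ 0 < ψ u := by
    have h1 : ∀ᶠ u in 𝓝 x0, 0 < u := eventually_gt_nhds hx0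
    have h2 : ∀ᶠ u in 𝓝 x0, 0 < ψ u := hψc.eventually (eventually_gt_nhds hψ0)
    exact h1.and h2
  obtain ⟨δ, hδ, hδp⟩ := Metric.eventually_nhds_iff.mp hev
  have hball : Metric.ball x0 δ ⊆ Set.Ioi 0 := fun u hu => (hδp (Metric.mem_ball.mp hu)).1
  have hψball : ∀ u ∈ Metric.ball x0 δ, 0 < ψ u := fun u hu => (hδp (Metric.mem_ball.mp hu)).2
  set F : ℝ → ℝ := fun s => ∫ u in x0..s, φ u with hFdef
  have hFd : ∀ u ∈ Metric.ball x0 δ, HasDerivAt F (φ u) u :=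
    fun u hu => F_hasDeriv (phi_contOn k hk v a c w hc) hx0 (hball hu)
  have hφd : ∀ u ∈ Metric.ball x0 δ, HasDerivAt φ (ψ u) u :=
    fun u hu => phi_hasDeriv k hk v a c w hc (hball hu)
  have hFc : ContinuousOn F (Metric.ball x0 δ) :=
    fun u hu => ((hFd u hu).continuousAt).continuousWithinAt
  have hx0b : x0 ∈ Metric.ball x0 δ := Metric.mem_ball_self hδ
  have hφ0 : φ x0 = 0 := by
    simp only [hφdef]
    rw [hcx, div_self (pow_pos hx0 a).ne', Real.log_one, mul_zero]
  -- strict convexity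
  have hconv : StrictConvexOn ℝ (Metric.ball x0 δ) F := by
    refine strictConvexOn_of_deriv2_pos (convex_ball x0 δ) hFc (fun u hu => ?_)
    rw [Metric.isOpen_ball.interior_eq] at hu
    have h2 : deriv^[2] F u = deriv (deriv F) u := rfl
    rw [h2, hFdef]
    rw [F_deriv2 k hk v a c w hc hx0 (hball hu)]
    exact hψball u hu
  -- φ strictly monotone on the ball
  have hmono : StrictMonoOn φ (Metric.ball x0 δ) := by
    refine strictMonoOn_of_deriv_pos (convex_ball x0 δ)
      ((phi_contOn k hk v a c w hc).mono hball) (fun u hu => ?_)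
    rw [Metric.isOpen_ball.interior_eq] at hu
    rw [(hφd u hu).deriv]
    exact hψball u hu
  have hmem : ∀ s ∈ Metric.ball x0 δ, ∀ u : ℝ, min x0 s ≤ u → u ≤ max x0 s →
      u ∈ Metric.ball x0 δ := by
    intro s hs u h1 h2
    rw [Real.ball_eq_Ioo] at hs ⊢
    constructor
    · exact lt_of_lt_of_le (lt_min (by linarith) hs.1) h1
    · exact lt_of_le_of_lt h2 (max_lt (by linarith) hs.2)
  have hFpos : ∀ s ∈ Metric.ball x0 δ, s ≠ x0 → 0 < F s := by
    intro s hs hne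
    have hsp : 0 < s := hball hs
    have hInt : IntervalIntegrable φ volume x0 s :=
      ((phi_contOn k hk v a c w hc).mono (uIcc_sub hx0 hsp)).intervalIntegrable
    rcases lt_or_gt_of_ne hne with h | h
    · -- s < x0
      have hneg : ∀ u ∈ Set.Ioo s x0, 0 < -φ u := by
        intro u hu
        have hub : u ∈ Metric.ball x0 δ := hmem s hs u
          (le_of_lt (lt_of_le_of_lt (min_le_right x0 s) hu.1))
          (le_of_lt (lt_of_lt_of_le hu.2 (le_max_left x0 s)))
        have h3 := hmono hub hx0b hu.2
        rw [hφ0] at h3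
        linarith
      have h4 := intervalIntegral.intervalIntegral_pos_of_pos_on (hInt.symm.neg) hneg h
      simp only [Pi.neg_apply, intervalIntegral.integral_neg] at h4
      have h5 : (∫ u in x0..s, φ u) = -(∫ u in s..x0, φ u) := intervalIntegral.integral_symm s x0
      show 0 < ∫ u in x0..s, φ u
      rw [h5]
      linarith
    · -- x0 < s
      have hpos : ∀ u ∈ Set.Ioo x0 s, 0 < φ u := by
        intro u hu
        have hub : u ∈ Metric.ball x0 δ := hmem s hs u
          (le_of_lt (lt_of_le_of_lt (min_le_left x0 s) hu.1))
          (le_of_lt (lt_of_lt_of_le hu.2 (le_max_right x0 s)))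
        have h3 := hmono hx0b hub hu.1
        rw [hφ0] at h3
        linarith
      exact intervalIntegral.intervalIntegral_pos_of_pos_on hInt hpos h
  refine ⟨δ, hδ, hball, hconv, ?_, hFpos⟩
  intro s hs
  rcases eq_or_ne s x0 with rfl | hne
  · show (0:ℝ) ≤ ∫ u in s..s, φ u
    rw [intervalIntegral.integral_same]
  · exact (hFpos s hs hne).le
end Aux

/-- Lemma 4.2 (positive-definiteness part): for the two-species 1-dimensional
mass-action system with reaction classes `L` (vector `ω = (wi, wj)`) and `R`
(vector `−ω`), the candidate Lyapunov function `f` has vanishing gradient at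
the reaction vector balanced equilibrium `(xi*, xj*)`, its Hessian is the
stated diagonal matrix, and under the two sign conditions `f` is strictly
convex near the equilibrium and positive on a punctured neighborhood. -/
theorem two_species_lyapunov_positive_definite
    (ιL ιR : Type) [Fintype ιL] [Fintype ιR] [Nonempty ιL] [Nonempty ιR]
    (kL : ιL → ℝ) (kR : ιR → ℝ) (hkL : ∀ l, 0 < kL l) (hkR : ∀ l, 0 < kR l)
    (wi wj : ℤ) (hwi : wi ≠ 0) (hwj : wj ≠ 0)
    (a b : ℕ) (vil : ιR → ℕ) (vjl : ιL → ℕ)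
    (xi xj : ℝ) (hxi : 0 < xi) (hxj : 0 < xj)
    -- reaction vector balanced equilibrium
    (hbal : ∑ l, kL l * xi ^ a * xj ^ vjl l = ∑ l, kR l * xj ^ b * xi ^ vil l)
    (c : ℝ)
    (hc1 : c = xi ^ a / ∑ l, kR l * xi ^ vil l)
    (hc2 : c = xj ^ b / ∑ l, kL l * xj ^ vjl l)
    (f : ℝ × ℝ → ℝ)
    (hf : ∀ y : ℝ × ℝ, f y =
      -(∫ t in xi..y.1, (wi : ℝ)⁻¹ * Real.log (t ^ a / (c * ∑ l, kR l * t ^ vil l))) +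
      (∫ t in xj..y.2, (wj : ℝ)⁻¹ * Real.log (t ^ b / (c * ∑ l, kL l * t ^ vjl l)))) :
    f (xi, xj) = 0 ∧
    deriv (fun t => f (t, xj)) xi = 0 ∧
    deriv (fun t => f (xi, t)) xj = 0 ∧
    -- Hessian: diagonal with the stated entries
    (∀ y2 t : ℝ, 0 < t →
      deriv (deriv (fun s => f (s, y2))) t =
        -((wi : ℝ)⁻¹ * ∑ l, kR l * ((a : ℝ) - (vil l : ℝ)) * t ^ ((vil l : ℝ) - 1)) /
          (∑ l, kR l * t ^ vil l)) ∧
    (∀ y1 t : ℝ, 0 < t →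
      deriv (deriv (fun s => f (y1, s))) t =
        ((wj : ℝ)⁻¹ * ∑ l, kL l * ((b : ℝ) - (vjl l : ℝ)) * t ^ ((vjl l : ℝ) - 1)) /
          (∑ l, kL l * t ^ vjl l)) ∧
    (∀ y1 t : ℝ, deriv (fun s => deriv (fun s' => f (s', s)) t) y1 = 0) ∧
    -- strict convexity / positivity under the sign conditions
    ((wi : ℝ)⁻¹ * (∑ l, kR l * ((a : ℝ) - (vil l : ℝ)) * xi ^ ((vil l : ℝ) - 1)) < 0 →
     0 < (wj : ℝ)⁻¹ * (∑ l, kL l * ((b : ℝ) - (vjl l : ℝ)) * xj ^ ((vjl l : ℝ) - 1)) →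
     ∃ ε > 0,
       StrictConvexOn ℝ
         (Metric.ball ((xi, xj) : ℝ × ℝ) ε ∩ {y : ℝ × ℝ | 0 < y.1 ∧ 0 < y.2}) f ∧
       ∀ y ∈ Metric.ball ((xi, xj) : ℝ × ℝ) ε ∩ {y : ℝ × ℝ | 0 < y.1 ∧ 0 < y.2},
         y ≠ (xi, xj) → 0 < f y) := by
  have hSi : 0 < ∑ l, kR l * xi ^ vil l := sum_pos' kR hkR vil hxi
  have hSj : 0 < ∑ l, kL l * xj ^ vjl l := sum_pos' kL hkL vjl hxj
  have hcpos : 0 < c := hc1 ▸ div_pos (pow_pos hxi a) hSi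
  have hcxi : c * ∑ l, kR l * xi ^ vil l = xi ^ a := by
    rw [hc1]; field_simp
  have hcxj : c * ∑ l, kL l * xj ^ vjl l = xj ^ b := by
    rw [hc2]; field_simp
  set φi : ℝ → ℝ := fun t => -(wi : ℝ)⁻¹ * Real.log (t ^ a / (c * ∑ l, kR l * t ^ vil l))
    with hφi
  set φj : ℝ → ℝ := fun t => (wj : ℝ)⁻¹ * Real.log (t ^ b / (c * ∑ l, kL l * t ^ vjl l))
    with hφj
  set Fi : ℝ → ℝ := fun s => ∫ u in xi..s, φi u with hFi
  set Fj : ℝ → ℝ := fun s => ∫ u in xj..s, φj u with hFj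
  have hf' : ∀ y : ℝ × ℝ, f y = Fi y.1 + Fj y.2 := by
    intro y
    rw [hf y, hFi, hFj, ← intervalIntegral.integral_neg]
    simp only [hφi, hφj, neg_mul]
  have hφi0 : φi xi = 0 := by
    simp only [hφi]
    rw [hcxi, div_self (pow_pos hxi a).ne', Real.log_one, mul_zero]
  have hφj0 : φj xj = 0 := by
    simp only [hφj]
    rw [hcxj, div_self (pow_pos hxj b).ne', Real.log_one, mul_zero]
  have hFid : ∀ t : ℝ, 0 < t → HasDerivAt Fi (φi t) t :=
    fun t ht => F_hasDeriv (phi_contOn kR hkR vil a c _ hcpos) hxi ht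
  have hFjd : ∀ t : ℝ, 0 < t → HasDerivAt Fj (φj t) t :=
    fun t ht => F_hasDeriv (phi_contOn kL hkL vjl b c _ hcpos) hxj ht
  refine ⟨?_, ?_, ?_, ?_, ?_, ?_, ?_⟩
  · rw [hf' (xi, xj)]
    show (∫ u in xi..xi, φi u) + (∫ u in xj..xj, φj u) = 0
    rw [intervalIntegral.integral_same, intervalIntegral.integral_same, add_zero]
  · have h1 : (fun t => f (t, xj)) = fun t => Fi t + Fj xj := funext fun t => hf' (t, xj)
    rw [h1]
    rw [deriv_add_const]
    rw [(hFid xi hxi).deriv, hφi0]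
  · have h1 : (fun t => f (xi, t)) = fun t => Fi xi + Fj t := funext fun t => hf' (xi, t)
    rw [h1]
    rw [deriv_const_add]
    rw [(hFjd xj hxj).deriv, hφj0]
  · intro y2 t ht
    have h1 : (fun s => f (s, y2)) = fun s => Fi s + Fj y2 := funext fun s => hf' (s, y2)
    rw [h1]
    have h2 : deriv (fun s => Fi s + Fj y2) = deriv Fi := funext fun u => deriv_add_const _
    rw [h2, hFi]
    rw [F_deriv2 kR hkR vil a c _ hcpos hxi ht, neg_mul]
  · intro y1 t ht
    have h1 : (fun s => f (y1, s)) = fun s => Fi y1 + Fj s := funext fun s => hf' (y1, s)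
    rw [h1]
    have h2 : deriv (fun s => Fi y1 + Fj s) = deriv Fj := funext fun u => deriv_const_add _
    rw [h2, hFj]
    rw [F_deriv2 kL hkL vjl b c _ hcpos hxj ht]
  · intro y1 t
    have h1 : ∀ s : ℝ, deriv (fun s' => f (s', s)) t = deriv Fi t := by
      intro s
      have h2 : (fun s' => f (s', s)) = fun s' => Fi s' + Fj s := funext fun s' => hf' (s', s)
      rw [h2, deriv_add_const]
    simp only [h1]
    exact deriv_const _ _
  · intro hiSign hjSign
    obtain ⟨δi, hδi, hballi, hconvi, hnni, hposi⟩ :=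
      aux_pos kR hkR vil a c (-(wi : ℝ)⁻¹) xi hcpos hxi hcxi
        (by rw [neg_mul]; exact neg_pos.2 hiSign)
    obtain ⟨δj, hδj, hballj, hconvj, hnnj, hposj⟩ :=
      aux_pos kL hkL vjl b c ((wj : ℝ)⁻¹) xj hcpos hxj hcxj hjSign
    refine ⟨min δi δj, lt_min hδi hδj, ?_, ?_⟩
    · -- strict convexity
      have hSconv : Convex ℝ (Metric.ball ((xi, xj) : ℝ × ℝ) (min δi δj)
          ∩ {y : ℝ × ℝ | 0 < y.1 ∧ 0 < y.2}) := by
        refine (convex_ball _ _).inter ?_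
        exact (convex_Ioi (0:ℝ)).prod (convex_Ioi (0:ℝ))
      refine ⟨hSconv, ?_⟩
      intro y hy z hz hne α β hα hβ hαβ
      have hy1 : y.1 ∈ Metric.ball xi δi := by
        have := hy.1; rw [← ball_prod_same] at this
        exact Metric.ball_subset_ball (min_le_left δi δj) this.1
      have hy2 : y.2 ∈ Metric.ball xj δj := by
        have := hy.1; rw [← ball_prod_same] at this
        exact Metric.ball_subset_ball (min_le_right δi δj) this.2
      have hz1 : z.1 ∈ Metric.ball xi δi := by
        have := hz.1; rw [← ball_prod_same] at this
        exact Metric.ball_subset_ball (min_le_left δi δj) this.1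
      have hz2 : z.2 ∈ Metric.ball xj δj := by
        have := hz.1; rw [← ball_prod_same] at this
        exact Metric.ball_subset_ball (min_le_right δi δj) this.2
      have hgoal : f (α • y + β • z) = Fi (α * y.1 + β * z.1) + Fj (α * y.2 + β * z.2) := by
        rw [hf' (α • y + β • z)]
        simp [Prod.smul_fst, Prod.smul_snd, smul_eq_mul]
      rw [hgoal, smul_eq_mul, smul_eq_mul, hf' y, hf' z]
      rcases eq_or_ne y.1 z.1 with h1 | h1
      · have h2 : y.2 ≠ z.2 := fun h2 => hne (Prod.ext h1 h2)
        have A : Fi (α * y.1 + β * z.1) ≤ α * Fi y.1 + β * Fi z.1 := by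
          have := hconvi.convexOn.2 hy1 hz1 hα.le hβ.le hαβ
          simpa only [smul_eq_mul] using this
        have B : Fj (α * y.2 + β * z.2) < α * Fj y.2 + β * Fj z.2 := by
          have := hconvj.2 hy2 hz2 h2 hα hβ hαβ
          simpa only [smul_eq_mul] using this
        nlinarith [A, B]
      · have A : Fi (α * y.1 + β * z.1) < α * Fi y.1 + β * Fi z.1 := by
          have := hconvi.2 hy1 hz1 h1 hα hβ hαβ
          simpa only [smul_eq_mul] using this
        have B : Fj (α * y.2 + β * z.2) ≤ α * Fj y.2 + β * Fj z.2 := by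
          have := hconvj.convexOn.2 hy2 hz2 hα.le hβ.le hαβ
          simpa only [smul_eq_mul] using this
        nlinarith [A, B]
    · -- positivity
      intro y hy hne
      have hy1 : y.1 ∈ Metric.ball xi δi := by
        have := hy.1; rw [← ball_prod_same] at this
        exact Metric.ball_subset_ball (min_le_left δi δj) this.1
      have hy2 : y.2 ∈ Metric.ball xj δj := by
        have := hy.1; rw [← ball_prod_same] at this
        exact Metric.ball_subset_ball (min_le_right δi δj) this.2
      rw [hf' y]
      rcases eq_or_ne y.1 xi with h1 | h1
      · have h2 : y.2 ≠ xj := fun h2 => hne (Prod.ext h1 h2)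
        have hB := hposj y.2 hy2 h2
        have hA : Fi y.1 = 0 := by
          rw [h1]
          show (∫ u in xi..xi, φi u) = 0
          exact intervalIntegral.integral_same
        linarith
      · have hA := hposi y.1 hy1 h1
        have hB := hnnj y.2 hy2
        linarith
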